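/- For every strictly upper triangular n×n matrix A, there exists an upper triangular matrix C such that A = BC - CB, where B = Σ_{k=1}^{n-1} e_{k,k+1}. -/

import Mathlib

open Matrix

private def cfun {K : Type*} [Field K] (A' : ℕ → ℕ → K) : ℕ → ℕ → K
  | 0, _ => 0
  | (i+1), 0 => A' i 0
  | (i+1), (j+1) => A' i (j+1) + cfun A' i j

private lemma cfun_tri {K : Type*} [Field K] (A' : ℕ → ℕ → K)
    (hA' : ∀ i j, j ≤ i → A' i j = 0) :
    ∀ i j, j < i → cfun A' i j = 0 := by
  intro i
  induction i with
  | zero => intro j h; omega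
  | succ i ih =>
    intro j h
    match j with
    | 0 => simp [cfun, hA' i 0 (by omega)]
    | j+1 => simp [cfun, hA' i (j+1) (by omega), ih j (by omega)]

/-- For every strictly upper triangular `n × n` matrix `A` there is an
upper triangular matrix `C` with `A = BC - CB`, where `B = Σ_{k=1}^{n-1} e_{k,k+1}`. -/
theorem stmt8 {K : Type*} [Field K] {n : ℕ} (hn : 2 ≤ n)
    (A : Matrix (Fin n) (Fin n) K)
    (hA : ∀ a b : Fin n, b ≤ a → A a b = 0) :
    ∃ C : Matrix (Fin n) (Fin n) K,
      (∀ a b : Fin n, b < a → C a b = 0) ∧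
      A = (∑ k : Fin n, if h : (k : ℕ) + 1 < n then
              Matrix.single k (⟨(k : ℕ) + 1, h⟩ : Fin n) (1 : K) else 0) * C
        - C * (∑ k : Fin n, if h : (k : ℕ) + 1 < n then
              Matrix.single k (⟨(k : ℕ) + 1, h⟩ : Fin n) (1 : K) else 0) := by
  set A' : ℕ → ℕ → K := fun i j =>
    if h : i < n ∧ j < n then A ⟨i, h.1⟩ ⟨j, h.2⟩ else 0 with hA'def
  have hA' : ∀ i j, j ≤ i → A' i j = 0 := by
    intro i j hji
    simp only [hA'def]
    split
    · exact hA _ _ hji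
    · rfl
  set C : Matrix (Fin n) (Fin n) K := fun i j => cfun A' i j with hCdef
  have hCtri : ∀ a b : Fin n, b < a → C a b = 0 := by
    intro a b hba
    exact cfun_tri A' hA' _ _ hba
  refine ⟨C, hCtri, ?_⟩
  set S : Matrix (Fin n) (Fin n) K :=
    ∑ k : Fin n, if h : (k : ℕ) + 1 < n then
        Matrix.single k (⟨(k : ℕ) + 1, h⟩ : Fin n) (1 : K) else 0 with hSdef
  have hS : ∀ i j : Fin n, S i j = if (j : ℕ) = (i : ℕ) + 1 then 1 else 0 := by
    intro i j
    rw [hSdef, Matrix.sum_apply]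
    rw [Finset.sum_eq_single i]
    · by_cases hi : (i : ℕ) + 1 < n
      · rw [dif_pos hi, Matrix.single]
        simp only [Matrix.of_apply]
        by_cases hj : (j : ℕ) = (i : ℕ) + 1
        · rw [if_pos (by exact ⟨trivial, Fin.ext hj.symm⟩), if_pos hj]
        · rw [if_neg, if_neg hj]
          rintro ⟨-, h⟩
          exact hj (congrArg Fin.val h).symm
      · rw [dif_neg hi, if_neg (by have := j.isLt; omega)]
        rfl
    · intro k _ hk
      by_cases hki : (k : ℕ) + 1 < n
      · rw [dif_pos hki, Matrix.single]
        simp only [Matrix.of_apply]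
        rw [if_neg]
        rintro ⟨h, -⟩
        exact hk h
      · rw [dif_neg hki]
        rfl
    · simp
  ext i j
  rw [Matrix.sub_apply, Matrix.mul_apply, Matrix.mul_apply]
  have h1 : ∑ k : Fin n, S i k * C k j
      = if h : (i : ℕ) + 1 < n then C ⟨(i : ℕ) + 1, h⟩ j else 0 := by
    split_ifs with h
    · rw [Finset.sum_eq_single (⟨(i : ℕ) + 1, h⟩ : Fin n)]
      · rw [hS]; simp
      · intro k _ hk
        rw [hS]
        rw [if_neg, zero_mul]
        intro hc; exact hk (Fin.ext hc)
      · simp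
    · apply Finset.sum_eq_zero
      intro k _
      rw [hS, if_neg, zero_mul]
      omega
  have h2 : ∑ k : Fin n, C i k * S k j
      = if h : 0 < (j : ℕ) then C i ⟨(j : ℕ) - 1, by omega⟩ else 0 := by
    split_ifs with h
    · rw [Finset.sum_eq_single (⟨(j : ℕ) - 1, by omega⟩ : Fin n)]
      · rw [hS]
        simp only
        rw [if_pos (by omega), mul_one]
      · intro k _ hk
        rw [hS, if_neg, mul_zero]
        intro hc
        apply hk; apply Fin.ext; simp; omega
      · simp
    · apply Finset.sum_eq_zero
      intro k _
      rw [hS, if_neg, mul_zero]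
      omega
  rw [h1, h2]
  have hAij : A i j = A' (i : ℕ) (j : ℕ) := by
    simp [hA'def, i.isLt, j.isLt]
  by_cases hi : (i : ℕ) + 1 < n
  · rw [dif_pos hi]
    by_cases hj : 0 < (j : ℕ)
    · rw [dif_pos hj]
      obtain ⟨j', hj'⟩ : ∃ j', (j : ℕ) = j' + 1 := ⟨(j : ℕ) - 1, by omega⟩
      have : C ⟨(i : ℕ) + 1, hi⟩ j = A' (i : ℕ) (j : ℕ) + C i ⟨(j : ℕ) - 1, by omega⟩ := by
        simp only [hCdef]
        conv_lhs => rw [show ((j : Fin n) : ℕ) = j' + 1 from hj']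
        simp only [cfun]
        congr 1
        · rw [hj']
        · congr 1; omega
      rw [this, hAij]; ring
    · rw [dif_neg hj]
      have hj0 : (j : ℕ) = 0 := by omega
      have : C ⟨(i : ℕ) + 1, hi⟩ j = A' (i : ℕ) 0 := by
        simp only [hCdef]
        conv_lhs => rw [show ((j : Fin n) : ℕ) = 0 from hj0]
        simp [cfun]
      rw [this, hAij, hj0]; ring
  · rw [dif_neg hi]
    have hin : (i : ℕ) = n - 1 := by have := i.isLt; omega
    have hAz : A i j = 0 := hA i j (by rw [Fin.le_def]; have := j.isLt; omega)
    rw [hAz]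
    by_cases hj : 0 < (j : ℕ)
    · rw [dif_pos hj]
      have : C i ⟨(j : ℕ) - 1, by omega⟩ = 0 := by
        apply hCtri
        rw [Fin.lt_def]
        simp
        have := j.isLt; omega
      rw [this]; ring
    · rw [dif_neg hj]; ring
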